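/- Let u ∈ ℝ^M and v ∈ ℝ^N be constant vectors and set Q := v·uᵀ (an N×M matrix of rank at most one). Let φ : ℝ³ → (M×N real matrices) be infinitely differentiable and satisfy the matrix pKP equation with product Q: ∂_x(4φ_t − φ_xxx − 6 φ_x Q φ_x) = 3φ_yy − 6(φ_x Q φ_y − φ_y Q φ_x). Then the scalar function ϕ := tr(Q·φ) = uᵀ·φ·v satisfies the scalar pKP equation ∂_x(4ϕ_t − ϕ_xxx − 6 ϕ_x²) − 3ϕ_yy = 0. -/

import Mathlib

attribute [local instance] Matrix.normedAddCommGroup Matrix.normedSpace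

/-- Partial derivative in the `x`-direction of a function of three real variables. -/
noncomputable def pdx {E : Type*} [NormedAddCommGroup E] [NormedSpace ℝ E]
    (f : ℝ × ℝ × ℝ → E) : ℝ × ℝ × ℝ → E :=
  fun p => fderiv ℝ f p (1, 0, 0)

/-- Partial derivative in the `y`-direction of a function of three real variables. -/
noncomputable def pdy {E : Type*} [NormedAddCommGroup E] [NormedSpace ℝ E]
    (f : ℝ × ℝ × ℝ → E) : ℝ × ℝ × ℝ → E :=
  fun p => fderiv ℝ f p (0, 1, 0)

/-- Partial derivative in the `t`-direction of a function of three real variables. -/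
noncomputable def pdt {E : Type*} [NormedAddCommGroup E] [NormedSpace ℝ E]
    (f : ℝ × ℝ × ℝ → E) : ℝ × ℝ × ℝ → E :=
  fun p => fderiv ℝ f p (0, 0, 1)

open Matrix

/-- trace of `Q * ·` as a continuous linear map. -/
noncomputable def traceL {M N : ℕ} (Q : Matrix (Fin N) (Fin M) ℝ) :
    Matrix (Fin M) (Fin N) ℝ →L[ℝ] ℝ :=
  LinearMap.toContinuousLinearMap
    { toFun := fun A => (Q * A).trace
      map_add' := by intro A B; simp [Matrix.mul_add]
      map_smul' := by intro c A; simp [Matrix.mul_smul] }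

lemma traceL_apply {M N : ℕ} (Q : Matrix (Fin N) (Fin M) ℝ) (A) :
    traceL Q A = (Q * A).trace := rfl

/-- `(A, B) ↦ A * Q * B` as a continuous bilinear map. -/
noncomputable def mulQ {M N : ℕ} (Q : Matrix (Fin N) (Fin M) ℝ) :
    Matrix (Fin M) (Fin N) ℝ →L[ℝ] Matrix (Fin M) (Fin N) ℝ →L[ℝ] Matrix (Fin M) (Fin N) ℝ :=
  LinearMap.toContinuousLinearMap
    { toFun := fun A => LinearMap.toContinuousLinearMap
        { toFun := fun B => A * Q * B
          map_add' := by intro B C; simp [Matrix.mul_add]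
          map_smul' := by intro c B; simp [Matrix.mul_smul] }
      map_add' := by
        intro A B; ext C; simp [Matrix.add_mul]
      map_smul' := by
        intro c A; ext B; simp [Matrix.smul_mul] }

lemma mulQ_apply {M N : ℕ} (Q : Matrix (Fin N) (Fin M) ℝ) (A B) :
    mulQ Q A B = A * Q * B := rfl

lemma pd_comp_clm {E F : Type*} [NormedAddCommGroup E] [NormedSpace ℝ E]
    [NormedAddCommGroup F] [NormedSpace ℝ F]
    (g : E →L[ℝ] F) {f : ℝ × ℝ × ℝ → E} (hf : Differentiable ℝ f)
    (w : ℝ × ℝ × ℝ) (p : ℝ × ℝ × ℝ) :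
    fderiv ℝ (fun q => g (f q)) p w = g (fderiv ℝ f p w) := by
  rw [show (fun q => g (f q)) = (⇑g ∘ f) from rfl,
    (g.hasFDerivAt.comp p (hf p).hasFDerivAt).fderiv]
  rfl

lemma contDiff_pd {E : Type*} [NormedAddCommGroup E] [NormedSpace ℝ E]
    {f : ℝ × ℝ × ℝ → E} (hf : ContDiff ℝ (⊤ : ℕ∞) f) (w : ℝ × ℝ × ℝ) :
    ContDiff ℝ (⊤ : ℕ∞) (fun p => fderiv ℝ f p w) :=
  (ContinuousLinearMap.apply ℝ E w).contDiff.comp (hf.fderiv_right (by exact_mod_cast le_top))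

lemma QAQ {M N : ℕ} (u : Fin M → ℝ) (v : Fin N → ℝ) (A : Matrix (Fin M) (Fin N) ℝ) :
    vecMulVec v u * A * vecMulVec v u
      = (Matrix.trace (vecMulVec v u * A)) • vecMulVec v u := by
  ext i j
  simp [Matrix.mul_apply, Matrix.vecMulVec_apply, Matrix.trace, Matrix.diag,
    Finset.sum_mul, Finset.mul_sum]
  conv_rhs => rw [Finset.sum_comm]
  rw [Finset.sum_comm]
  refine Finset.sum_congr rfl fun k _ => Finset.sum_congr rfl fun l _ => by ring

lemma trace_QAQB {M N : ℕ} (u : Fin M → ℝ) (v : Fin N → ℝ)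
    (Q : Matrix (Fin N) (Fin M) ℝ) (hQ : Q = Matrix.vecMulVec v u)
    (A B : Matrix (Fin M) (Fin N) ℝ) :
    Matrix.trace (Q * (A * Q * B)) = Matrix.trace (Q * A) * Matrix.trace (Q * B) := by
  have h : Q * A * Q = (Matrix.trace (Q * A)) • Q := by rw [hQ]; exact QAQ u v A
  calc Matrix.trace (Q * (A * Q * B)) = Matrix.trace ((Q * A * Q) * B) := by
        rw [← Matrix.mul_assoc, ← Matrix.mul_assoc]
    _ = Matrix.trace (Q * A) * Matrix.trace (Q * B) := by
        rw [h, Matrix.smul_mul, Matrix.trace_smul, smul_eq_mul]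

/-- Rank-one reduction: if `Q = v uᵀ` has rank one and `φ` solves the matrix
pKP equation with product `Q`, then `ϕ = tr(Q φ)` solves the scalar pKP
equation. -/
theorem scalar_pKP_of_rank_one (M N : ℕ) (hM : 0 < M) (hN : 0 < N)
    (u : Fin M → ℝ) (v : Fin N → ℝ)
    (Q : Matrix (Fin N) (Fin M) ℝ) (hQ : Q = Matrix.vecMulVec v u)
    (φ : ℝ × ℝ × ℝ → Matrix (Fin M) (Fin N) ℝ)
    (hφ : ContDiff ℝ (⊤ : ℕ∞) φ)
    (hpKP : ∀ p, pdx (fun q => (4 : ℝ) • pdt φ q - pdx (pdx (pdx φ)) q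
          - (6 : ℝ) • (pdx φ q * Q * pdx φ q)) p
        = (3 : ℝ) • pdy (pdy φ) p
          - (6 : ℝ) • (pdx φ p * Q * pdy φ p - pdy φ p * Q * pdx φ p))
    (ϕ : ℝ × ℝ × ℝ → ℝ)
    (hϕ : ∀ p, ϕ p = Matrix.trace (Q * φ p)) :
    ∀ p, pdx (fun q => 4 * pdt ϕ q - pdx (pdx (pdx ϕ)) q
          - 6 * (pdx ϕ q) ^ 2) p
        - 3 * pdy (pdy ϕ) p = 0 := by
  intro p
  set L := traceL Q with hL
  have hϕ' : ϕ = fun q => L (φ q) := funext fun q => by rw [hϕ]; rfl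
  -- smoothness of the various derivatives
  have h1 : ContDiff ℝ (⊤ : ℕ∞) (pdx φ) := contDiff_pd hφ _
  have h2 : ContDiff ℝ (⊤ : ℕ∞) (pdx (pdx φ)) := contDiff_pd h1 _
  have h3 : ContDiff ℝ (⊤ : ℕ∞) (pdx (pdx (pdx φ))) := contDiff_pd h2 _
  have ht : ContDiff ℝ (⊤ : ℕ∞) (pdt φ) := contDiff_pd hφ _
  have hy : ContDiff ℝ (⊤ : ℕ∞) (pdy φ) := contDiff_pd hφ _
  have hyy : ContDiff ℝ (⊤ : ℕ∞) (pdy (pdy φ)) := contDiff_pd hy _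
  have hP : ContDiff ℝ (⊤ : ℕ∞) (fun q => pdx φ q * Q * pdx φ q) := by
    have := ((mulQ Q).isBoundedBilinearMap.contDiff (n := (⊤ : ℕ∞))).comp (h1.prodMk h1)
    exact this
  have hF : ContDiff ℝ (⊤ : ℕ∞) (fun q => (4 : ℝ) • pdt φ q - pdx (pdx (pdx φ)) q
      - (6 : ℝ) • (pdx φ q * Q * pdx φ q)) :=
    ((ht.const_smul (4:ℝ)).sub h3).sub (hP.const_smul (6:ℝ))
  -- commuting L with derivatives
  have cx : pdx ϕ = fun q => L (pdx φ q) := by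
    funext q; rw [hϕ']
    exact pd_comp_clm L (hφ.differentiable (by simp)) _ q
  have cy : pdy ϕ = fun q => L (pdy φ q) := by
    funext q; rw [hϕ']
    exact pd_comp_clm L (hφ.differentiable (by simp)) _ q
  have ct : pdt ϕ = fun q => L (pdt φ q) := by
    funext q; rw [hϕ']
    exact pd_comp_clm L (hφ.differentiable (by simp)) _ q
  have cxx : pdx (pdx ϕ) = fun q => L (pdx (pdx φ) q) := by
    funext q; rw [cx]
    exact pd_comp_clm L (h1.differentiable (by simp)) _ q
  have cxxx : pdx (pdx (pdx ϕ)) = fun q => L (pdx (pdx (pdx φ)) q) := by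
    funext q; rw [cxx]
    exact pd_comp_clm L (h2.differentiable (by simp)) _ q
  have cyy : pdy (pdy ϕ) = fun q => L (pdy (pdy φ) q) := by
    funext q; rw [cy]
    exact pd_comp_clm L (hy.differentiable (by simp)) _ q
  -- the scalar expression is L of the matrix expression
  have hG : (fun q => 4 * pdt ϕ q - pdx (pdx (pdx ϕ)) q - 6 * (pdx ϕ q) ^ 2)
      = fun q => L ((4 : ℝ) • pdt φ q - pdx (pdx (pdx φ)) q
          - (6 : ℝ) • (pdx φ q * Q * pdx φ q)) := by
    funext q
    rw [ct, cxxx, cx]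
    simp only [map_sub, _root_.map_smul, smul_eq_mul]
    have : L (pdx φ q * Q * pdx φ q) = L (pdx φ q) * L (pdx φ q) := by
      simp only [hL, traceL_apply]
      exact trace_QAQB u v Q hQ _ _
    rw [this]; ring
  rw [hG, cyy]
  have key : pdx (fun q => L ((4 : ℝ) • pdt φ q - pdx (pdx (pdx φ)) q
          - (6 : ℝ) • (pdx φ q * Q * pdx φ q))) p
      = L (pdx (fun q => (4 : ℝ) • pdt φ q - pdx (pdx (pdx φ)) q
          - (6 : ℝ) • (pdx φ q * Q * pdx φ q)) p) :=
    pd_comp_clm L (hF.differentiable (by simp)) _ p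
  rw [key, hpKP p]
  simp only [map_sub, _root_.map_smul, smul_eq_mul]
  have h6 : L (pdx φ p * Q * pdy φ p) = L (pdy φ p * Q * pdx φ p) := by
    simp only [hL, traceL_apply]
    rw [trace_QAQB u v Q hQ, trace_QAQB u v Q hQ]; ring
  rw [h6]; ring
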